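/- Let V and W be Hilbert spaces, a : V × W → ℝ a continuous bilinear form, and T : V → W a bounded bijective linear operator such that a(u, T u) ≥ ‖u‖_V² for all u ∈ V. Then for every ℓ ∈ W' the problem: find u ∈ V with a(u, v) = ℓ(v) for all v ∈ W, has a unique solution. -/

import Mathlib

open scoped RealInnerProductSpace

/-- T-coercivity implies well-posedness: for a continuous bilinear form `a` on Hilbert
spaces `V × W` admitting a bounded bijective `T : V → W` with `a u (T u) ≥ ‖u‖²`,
every continuous functional `ℓ` on `W` yields a unique solution of `a u · = ℓ`. -/
theorem stmt0
    {V W : Type*} [NormedAddCommGroup V] [InnerProductSpace ℝ V] [CompleteSpace V]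
    [NormedAddCommGroup W] [InnerProductSpace ℝ W] [CompleteSpace W]
    (a : V →ₗ[ℝ] W →ₗ[ℝ] ℝ) (M : ℝ)
    (ha : ∀ (u : V) (v : W), |a u v| ≤ M * ‖u‖ * ‖v‖)
    (T : V →L[ℝ] W) (hT : Function.Bijective T)
    (hcoer : ∀ u : V, ‖u‖ ^ 2 ≤ a u (T u))
    (ℓ : W →L[ℝ] ℝ) :
    ∃! u : V, ∀ v : W, a u v = ℓ v := by
  -- the transported bilinear form on V, made opaque immediately
  obtain ⟨B, hBapp⟩ : ∃ B : V →L[ℝ] V →L[ℝ] ℝ, ∀ u w, B u w = a u (T w) := by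
    refine ⟨LinearMap.mkContinuous₂ (a.compl₂ (T : V →ₗ[ℝ] W)) (max M 0 * ‖T‖) ?_,
      fun u w => rfl⟩
    intro u w
    simp only [LinearMap.compl₂_apply, ContinuousLinearMap.coe_coe]
    calc ‖a u (T w)‖ ≤ M * ‖u‖ * ‖T w‖ := ha u (T w)
      _ ≤ max M 0 * ‖u‖ * (‖T‖ * ‖w‖) := by
            apply mul_le_mul
            · exact mul_le_mul_of_nonneg_right (le_max_left _ _) (norm_nonneg _)
            · exact T.le_opNorm w
            · exact norm_nonneg _
            · positivity
      _ = max M 0 * ‖T‖ * ‖u‖ * ‖w‖ := by ring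
  have hcoB : IsCoercive B := by
    refine ⟨1, one_pos, fun u => ?_⟩
    have h1 := hcoer u
    rw [hBapp]
    nlinarith [sq_nonneg ‖u‖]
  -- the Riesz representative of ℓ ∘ T, made opaque immediately
  obtain ⟨f, hfapp⟩ : ∃ f : V, ∀ w : V, (inner ℝ f w : ℝ) = ℓ (T w) := by
    refine ⟨(InnerProductSpace.toDual ℝ V).symm (ℓ.comp T), fun w => ?_⟩
    exact InnerProductSpace.toDual_symm_apply (𝕜 := ℝ) (E := V) (x := w) (y := ℓ.comp T)
  obtain ⟨u, hsol⟩ : ∃ u : V, ∀ v : W, a u v = ℓ v := by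
    refine ⟨hcoB.continuousLinearEquivOfBilin.symm f, ?_⟩
    have key : ∀ w : V, a (hcoB.continuousLinearEquivOfBilin.symm f) (T w) = ℓ (T w) := by
      intro w
      have h2 := hcoB.continuousLinearEquivOfBilin_apply
        (hcoB.continuousLinearEquivOfBilin.symm f) w
      rw [ContinuousLinearEquiv.apply_symm_apply] at h2
      rw [← hBapp, ← h2, hfapp]
    intro v
    obtain ⟨w, rfl⟩ := hT.2 v
    exact key w
  refine ⟨u, hsol, fun y hy => ?_⟩
  have hdiff : ∀ v : W, a (y - u) v = 0 := by
    intro v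
    simp [map_sub, hy v, hsol v]
  have hle : ‖y - u‖ ^ 2 ≤ 0 := by
    have h1 := hcoer (y - u)
    rwa [hdiff (T (y - u))] at h1
  have h0 : y - u = 0 := by
    have hn : ‖y - u‖ = 0 := by nlinarith [norm_nonneg (y - u)]
    simpa using hn
  exact sub_eq_zero.mp h0
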